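/- Let C be an [n,k;n_1,…,n_ℓ] sum-rank metric code over (F;K_1,…,K_ℓ). Then the dual of the sum-matroid associated to C equals the sum-matroid associated to the dual code C⊥; that is, for every L ∈ P(K^n), ρ_{C⊥}(L) = ρ_C(L⊥) + Rk(L) − ρ_C(K^n). -/

import Mathlib

open Module

/-! Setup for sum-rank metric codes and sum-matroids.

We fix `ℓ` finite fields `K i` with a common extension `F` (given by algebra
structures), and block lengths `nv i`.  The ambient space `F^n` (with
`n = ∑ i, nv i`) is modelled as the dependent product of the blocks `F^{nv i}`,
and an element of the product lattice `P(K^n)` is a tuple of `K i`-subspaces of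
`K i ^ (nv i)`. -/

/-- The ambient space `F^n`, split into `ℓ` blocks of sizes `nv i`. -/
abbrev SRAmb (ℓ : ℕ) (nv : Fin ℓ → ℕ) (F : Type) : Type :=
  (i : Fin ℓ) → Fin (nv i) → F

/-- The product lattice `P(K^n)`: tuples `L` where `L i` is a `K i`-subspace of
`K i ^ (nv i)`. -/
abbrev SRLat (ℓ : ℕ) (nv : Fin ℓ → ℕ) (K : Fin ℓ → Type) [∀ i, Field (K i)] : Type :=
  (i : Fin ℓ) → Submodule (K i) (Fin (nv i) → K i)

variable {ℓ : ℕ} {nv : Fin ℓ → ℕ} {F : Type} [Field F]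
  {K : Fin ℓ → Type} [∀ i, Field (K i)] [∀ i, Algebra (K i) F]

/-- `Rk(L) = ∑ i, dim_{K i} (L i)`. -/
noncomputable def SRrk (L : SRLat ℓ nv K) : ℕ := ∑ i, finrank (K i) (L i)

/-- Orthogonal complement of a subspace of `k^m` with respect to the standard
dot product. -/
def SRorth {k : Type} [Field k] {m : ℕ} (W : Submodule k (Fin m → k)) :
    Submodule k (Fin m → k) where
  carrier := {v | ∀ w ∈ W, ∑ t, v t * w t = 0}
  zero_mem' := by intro w hw; simp
  add_mem' := by
    intro a b ha hb w hw
    have h : ∑ t, (a + b) t * w t = (∑ t, a t * w t) + ∑ t, b t * w t := by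
      simp [add_mul, Finset.sum_add_distrib]
    rw [h, ha w hw, hb w hw, add_zero]
  smul_mem' := by
    intro c a ha w hw
    have h : ∑ t, (c • a) t * w t = c * ∑ t, a t * w t := by
      simp [Finset.mul_sum, mul_assoc]
    rw [h, ha w hw, mul_zero]

/-- Componentwise orthogonal complement `L^⊥` in the lattice `P(K^n)`. -/
def SRlatPerp (L : SRLat ℓ nv K) : SRLat ℓ nv K := fun i => SRorth (L i)

/-- The `i`-th component of the sum-rank support of `c ∈ F^n`: the `K i`-row
space of the coordinate matrix of the `i`-th block of `c` (described
basis-freely as the span of the images of the block of `c` under all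
`K i`-linear functionals `F → K i`). -/
def SRsupp (c : SRAmb ℓ nv F) (i : Fin ℓ) : Submodule (K i) (Fin (nv i) → K i) :=
  Submodule.span (K i) {v | ∃ f : F →ₗ[K i] K i, v = fun t => f (c i t)}

/-- The sum-rank weight `srank(c) = Rk(supp(c))`. -/
noncomputable def SRwt (c : SRAmb ℓ nv F) : ℕ :=
  ∑ i, finrank (K i) (SRsupp (K := K) c i)

/-- The sum-rank support space `V_L = {c ∈ F^n : supp(c) ⊆ L}`. -/
def SRVL (L : SRLat ℓ nv K) : Submodule F (SRAmb ℓ nv F) where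
  carrier := {c | ∀ i, SRsupp (K := K) c i ≤ L i}
  zero_mem' := by
    intro i
    apply Submodule.span_le.mpr
    rintro v ⟨f, rfl⟩
    have h : (fun t => f ((0 : SRAmb ℓ nv F) i t)) = (0 : Fin (nv i) → K i) := by
      funext t; simp
    rw [h]
    exact (L i).zero_mem
  add_mem' := by
    intro a b ha hb i
    apply Submodule.span_le.mpr
    rintro v ⟨f, rfl⟩
    have h : (fun t => f ((a + b) i t)) =
        (fun t => f (a i t)) + fun t => f (b i t) := by
      funext t; simp
    rw [h]
    exact (L i).add_mem (ha i (Submodule.subset_span ⟨f, rfl⟩))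
      (hb i (Submodule.subset_span ⟨f, rfl⟩))
  smul_mem' := by
    intro x a ha i
    apply Submodule.span_le.mpr
    rintro v ⟨f, rfl⟩
    have h : (fun t => f ((x • a) i t)) =
        fun t => (f.comp (LinearMap.mulLeft (K i) x)) (a i t) := by
      funext t; simp [smul_eq_mul]
    rw [h]
    exact ha i (Submodule.subset_span ⟨_, rfl⟩)

/-- The dual code `C^⊥` with respect to the standard bilinear form on `F^n`. -/
def SRdual (C : Submodule F (SRAmb ℓ nv F)) : Submodule F (SRAmb ℓ nv F) where
  carrier := {x | ∀ c ∈ C, ∑ i, ∑ t, x i t * c i t = 0}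
  zero_mem' := by intro c hc; simp
  add_mem' := by
    intro a b ha hb c hc
    have h : ∑ i, ∑ t, (a + b) i t * c i t =
        (∑ i, ∑ t, a i t * c i t) + ∑ i, ∑ t, b i t * c i t := by
      simp [add_mul, Finset.sum_add_distrib]
    rw [h, ha c hc, hb c hc, add_zero]
  smul_mem' := by
    intro x a ha c hc
    have h : ∑ i, ∑ t, (x • a) i t * c i t = x * ∑ i, ∑ t, a i t * c i t := by
      simp [Finset.mul_sum, mul_assoc]
    rw [h, ha c hc, mul_zero]

/-- `C(L) = {c ∈ C^⊥ : supp(c) ⊆ L^⊥} = C^⊥ ∩ V_{L^⊥}`. -/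
def SRCL (C : Submodule F (SRAmb ℓ nv F)) (L : SRLat ℓ nv K) :
    Submodule F (SRAmb ℓ nv F) :=
  SRdual C ⊓ SRVL (SRlatPerp L)

/-- The projection `Π_L : F^n → F^{Rk L}`, `x ↦ x Aᵀ`, where
`A = diag(A_1, …, A_ℓ)` and `A_i` is the matrix whose rows are the chosen basis
of `L i` over `K i`.  The target `F^{Rk L}` is indexed blockwise. -/
noncomputable def SRpi (L : SRLat ℓ nv K) :
    SRAmb ℓ nv F →ₗ[F] ((i : Fin ℓ) → Fin (finrank (K i) (L i)) → F) where
  toFun x := fun i j =>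
    ∑ t, x i t * algebraMap (K i) F ((Module.finBasis (K i) (L i) j).val t)
  map_add' x y := by
    funext i j
    simp [add_mul, Finset.sum_add_distrib]
  map_smul' a x := by
    funext i j
    simp [Finset.mul_sum, mul_assoc]

/-- The rank function `ρ_C(L) = dim_F Π_L(C^⊥)` of the sum-matroid associated
to the code `C`. -/
noncomputable def SRrho (C : Submodule F (SRAmb ℓ nv F)) (L : SRLat ℓ nv K) : ℕ :=
  finrank F (Submodule.map (SRpi (F := F) L) (SRdual C))

/-- Minimum sum-rank distance of a code. -/
noncomputable def SRminDist (K : Fin ℓ → Type) [∀ i, Field (K i)]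
    [∀ i, Algebra (K i) F] (C : Submodule F (SRAmb ℓ nv F)) : ℕ :=
  sInf {w | ∃ c ∈ C, c ≠ 0 ∧ SRwt (K := K) c = w}

/-- The `r`-th generalized sum-rank weight
`d_{SR,r}(C) = min{Rk L : dim_F (C ∩ V_L) ≥ r}`. -/
noncomputable def SRdgw (K : Fin ℓ → Type) [∀ i, Field (K i)]
    [∀ i, Algebra (K i) F] (C : Submodule F (SRAmb ℓ nv F)) (r : ℕ) : ℕ :=
  sInf {w | ∃ L : SRLat ℓ nv K, r ≤ finrank F ↥(C ⊓ SRVL L) ∧ SRrk L = w}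

/-- The sum-matroid axioms (R1), (R2), (R3) for a function `ρ : P(K^n) → ℕ`. -/
def IsSumMatroid (ρ : SRLat ℓ nv K → ℕ) : Prop :=
  (∀ L, ρ L ≤ SRrk L) ∧
  (∀ L L' : SRLat ℓ nv K, L ≤ L' → ρ L ≤ ρ L') ∧
  (∀ L L' : SRLat ℓ nv K, ρ (L ⊔ L') + ρ (L ⊓ L') ≤ ρ L + ρ L')

/-- The dual rank function `ρ*(L) = ρ(L^⊥) + Rk L − ρ(K^n)`. -/
noncomputable def SRdualRk (ρ : SRLat ℓ nv K → ℕ) (L : SRLat ℓ nv K) : ℕ :=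
  ρ (SRlatPerp L) + SRrk L - ρ ⊤

/-- The nullity function `η(L) = Rk L − ρ(L)`. -/
noncomputable def SReta (ρ : SRLat ℓ nv K → ℕ) (L : SRLat ℓ nv K) : ℕ :=
  SRrk L - ρ L

/-- The `i`-th generalized weight of a sum-matroid,
`d_i(M) = min{Rk L : η(L) = i}`. -/
noncomputable def SRgw (ρ : SRLat ℓ nv K → ℕ) (i : ℕ) : ℕ :=
  sInf {w | ∃ L : SRLat ℓ nv K, SReta ρ L = i ∧ SRrk L = w}


section GenDual
variable {k V : Type} [Field k] [AddCommGroup V] [Module k V] [FiniteDimensional k V]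

lemma aux_comap_dualAnn_finrank (B : V →ₗ[k] Module.Dual k V) (hB : Function.Injective B)
    (W : Submodule k V) :
    finrank k (Submodule.comap B W.dualAnnihilator) + finrank k W = finrank k V := by
  have hsur : Function.Surjective B := by
    rw [← LinearMap.range_eq_top]
    apply Submodule.eq_top_of_finrank_eq
    rw [LinearMap.finrank_range_of_inj hB, Subspace.dual_finrank_eq]
  let e : V ≃ₗ[k] Module.Dual k V := LinearEquiv.ofBijective B ⟨hB, hsur⟩
  have hc : Submodule.comap B W.dualAnnihilator
      = Submodule.comap (e : V →ₗ[k] Module.Dual k V) W.dualAnnihilator := rfl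
  rw [hc, Submodule.comap_equiv_eq_map_symm, LinearEquiv.finrank_map_eq,
    ← LinearEquiv.finrank_eq (Subspace.quotEquivAnnihilator W),
    Submodule.finrank_quotient_add_finrank]

end GenDual


lemma aux_exists_retraction {k : Type} [Field k] {m r : ℕ}
    {v : Fin r → (Fin m → k)} (hv : LinearIndependent k v) :
    ∃ g : (Fin m → k) →ₗ[k] (Fin r → k), ∀ j, g (v j) = Pi.single j 1 := by
  obtain ⟨W', hW'⟩ := Submodule.exists_isCompl (Submodule.span k (Set.range v))
  let b := Basis.span hv
  let π := Submodule.projectionOnto _ _ hW'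
  refine ⟨(Finsupp.linearEquivFunOnFinite k k (Fin r)).toLinearMap ∘ₗ
    (b.repr : _ →ₗ[k] _) ∘ₗ π, ?_⟩
  intro j
  have hmem : v j ∈ Submodule.span k (Set.range v) :=
    Submodule.subset_span (Set.mem_range_self j)
  have hπ : π (v j) = ⟨v j, hmem⟩ := by
    have := Submodule.projectionOnto_apply_left hW' (⟨v j, hmem⟩ : Submodule.span k (Set.range v))
    simpa using this
  have hbj : (⟨v j, hmem⟩ : Submodule.span k (Set.range v)) = b j :=
    (Module.Basis.span_apply hv j).symm
  simp only [LinearMap.coe_comp, Function.comp_apply, hπ, hbj]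
  rw [show ((b.repr : _ →ₗ[k] _) (b j)) = b.repr (b j) from rfl, Basis.repr_self]
  simp [Finsupp.linearEquivFunOnFinite_single]

lemma aux_linIndep_algebraMap {k F : Type} [Field k] [Field F] [Algebra k F] {m r : ℕ}
    {v : Fin r → (Fin m → k)} (hv : LinearIndependent k v) :
    LinearIndependent F (fun j => (fun t => algebraMap k F (v j t))) := by
  obtain ⟨g, hg⟩ := aux_exists_retraction hv
  rw [Fintype.linearIndependent_iff]
  intro c hc j0
  set φ : (Fin m → F) →ₗ[F] F := {
    toFun := fun x => ∑ t, x t * algebraMap k F (g (Pi.single t 1) j0),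
    map_add' := by intro a b; simp [add_mul, Finset.sum_add_distrib],
    map_smul' := by intro a x; simp [Finset.mul_sum, mul_assoc] } with hφdef
  have hφ : ∀ j, φ (fun t => algebraMap k F (v j t)) = if j0 = j then 1 else 0 := by
    intro j
    have h1 : ∀ t : Fin m, algebraMap k F (v j t) * algebraMap k F (g (Pi.single t 1) j0)
        = algebraMap k F (v j t * g (Pi.single t 1) j0) := by
      intro t; rw [map_mul]
    show (∑ t, algebraMap k F (v j t) * algebraMap k F (g (Pi.single t 1) j0)) = _
    simp_rw [h1, ← map_sum]
    have h2 : ∑ t, v j t * g (Pi.single t 1) j0 = g (v j) j0 := by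
      have h3 : v j = ∑ t, v j t • (Pi.single t (1 : k) : Fin m → k) := by
        have := Finset.univ_sum_single (v j)
        rw [← this]
        apply Finset.sum_congr rfl
        intro t _
        funext s
        simp [Pi.single_apply]
      conv_rhs => rw [h3]
      rw [map_sum]
      simp [Finset.sum_apply]
    rw [h2, hg j, Pi.single_apply]
    split <;> simp_all
  have h0 : φ (∑ j, c j • fun t => algebraMap k F (v j t)) = 0 := by rw [hc]; simp
  rw [map_sum] at h0
  simp_rw [map_smul, hφ, smul_eq_mul, mul_ite, mul_one, mul_zero] at h0
  simpa using h0

section ConcreteForms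

variable {ℓ : ℕ} {F : Type} [Field F]

/-- The standard bilinear form on `SRAmb`, as a map to the dual. -/
noncomputable def ambForm (F : Type) [Field F] {ℓ : ℕ} (m : Fin ℓ → ℕ) :
    SRAmb ℓ m F →ₗ[F] Module.Dual F (SRAmb ℓ m F) where
  toFun x :=
    { toFun := fun y => ∑ i, ∑ t, x i t * y i t
      map_add' := by intro a b; simp [mul_add, Finset.sum_add_distrib]
      map_smul' := by intro c a; simp [Finset.mul_sum, mul_left_comm] }
  map_add' x y := by
    apply LinearMap.ext; intro c
    simp [add_mul, Finset.sum_add_distrib]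
  map_smul' a x := by
    apply LinearMap.ext; intro c
    simp [Finset.mul_sum, mul_assoc]

lemma ambForm_apply {m : Fin ℓ → ℕ} (x y : SRAmb ℓ m F) :
    ambForm F m x y = ∑ i, ∑ t, x i t * y i t := rfl

lemma ambForm_inj (m : Fin ℓ → ℕ) : Function.Injective (ambForm F (ℓ := ℓ) m) := by
  rw [← LinearMap.ker_eq_bot, LinearMap.ker_eq_bot']
  intro x hx
  funext i t
  classical
  have h : ambForm F m x (Pi.single i (Pi.single t (1 : F))) = 0 := by rw [hx]; rfl
  rw [ambForm_apply] at h
  have houter : ∑ i', ∑ t', x i' t' * (Pi.single i (Pi.single t (1:F)) : SRAmb ℓ m F) i' t'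
      = ∑ t', x i t' * (Pi.single i (Pi.single t (1:F)) : SRAmb ℓ m F) i t' :=
    Finset.sum_eq_single_of_mem i (Finset.mem_univ i)
      (fun i' _ hi' => Finset.sum_eq_zero (fun t' _ => by simp [Pi.single_eq_of_ne hi']))
  have hinner : ∑ t', x i t' * (Pi.single i (Pi.single t (1:F)) : SRAmb ℓ m F) i t' = x i t :=
    by
      rw [Finset.sum_eq_single_of_mem t (Finset.mem_univ t)
        (fun t' _ ht' => by simp [Pi.single_eq_of_ne ht'])]
      simp
  rw [houter, hinner] at h
  simpa using h

lemma mem_SRdual {m : Fin ℓ → ℕ} {C : Submodule F (SRAmb ℓ m F)} {x : SRAmb ℓ m F} :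
    x ∈ SRdual C ↔ ∀ c ∈ C, ∑ i, ∑ t, x i t * c i t = 0 := Iff.rfl

lemma SRdual_eq_comap {m : Fin ℓ → ℕ} (C : Submodule F (SRAmb ℓ m F)) :
    SRdual C = Submodule.comap (ambForm F m) C.dualAnnihilator := by
  ext x
  rw [mem_SRdual, Submodule.mem_comap, Submodule.mem_dualAnnihilator]
  rfl

lemma finrank_SRAmb (m : Fin ℓ → ℕ) : Module.finrank F (SRAmb ℓ m F) = ∑ i, m i := by
  rw [Module.finrank_pi_fintype]
  simp [Module.finrank_pi]

lemma SRdual_finrank {m : Fin ℓ → ℕ} (C : Submodule F (SRAmb ℓ m F)) :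
    Module.finrank F (SRdual C) + Module.finrank F C = ∑ i, m i := by
  rw [SRdual_eq_comap, ← finrank_SRAmb (F := F) m]
  exact aux_comap_dualAnn_finrank _ (ambForm_inj m) C

lemma SRdual_SRdual {m : Fin ℓ → ℕ} (C : Submodule F (SRAmb ℓ m F)) :
    SRdual (SRdual C) = C := by
  have hle : C ≤ SRdual (SRdual C) := by
    intro c hc
    rw [mem_SRdual]
    intro x hx
    rw [mem_SRdual] at hx
    have h := hx c hc
    rw [← h]
    exact Finset.sum_congr rfl fun i _ => Finset.sum_congr rfl fun t _ => mul_comm _ _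
  refine (Submodule.eq_of_le_of_finrank_le hle ?_).symm
  have h1 := SRdual_finrank C
  have h2 := SRdual_finrank (SRdual C)
  omega

lemma SRdual_bot {m : Fin ℓ → ℕ} :
    SRdual (⊥ : Submodule F (SRAmb ℓ m F)) = ⊤ := by
  ext x
  simp only [Submodule.mem_top, iff_true, mem_SRdual]
  intro c hc
  rw [Submodule.mem_bot] at hc
  subst hc
  simp

lemma SRdual_top {m : Fin ℓ → ℕ} :
    SRdual (⊤ : Submodule F (SRAmb ℓ m F)) = ⊥ := by
  ext x
  simp only [Submodule.mem_bot, mem_SRdual]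
  constructor
  · intro h
    apply ambForm_inj m
    apply LinearMap.ext
    intro y
    rw [ambForm_apply]
    simpa using h y trivial
  · rintro rfl c _
    simp

/-- The standard bilinear form on `Fin m → k` as a map to the dual. -/
noncomputable def vecForm (k : Type) [Field k] (m : ℕ) :
    (Fin m → k) →ₗ[k] Module.Dual k (Fin m → k) where
  toFun x :=
    { toFun := fun y => ∑ t, x t * y t
      map_add' := by intro a b; simp [mul_add, Finset.sum_add_distrib]
      map_smul' := by intro c a; simp [Finset.mul_sum, mul_left_comm] }
  map_add' x y := by
    apply LinearMap.ext; intro c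
    simp [add_mul, Finset.sum_add_distrib]
  map_smul' a x := by
    apply LinearMap.ext; intro c
    simp [Finset.mul_sum, mul_assoc]

lemma vecForm_inj (k : Type) [Field k] (m : ℕ) : Function.Injective (vecForm k m) := by
  rw [← LinearMap.ker_eq_bot, LinearMap.ker_eq_bot']
  intro x hx
  funext t
  classical
  have h : vecForm k m x (Pi.single t (1 : k)) = 0 := by rw [hx]; rfl
  have h2 : vecForm k m x (Pi.single t (1 : k)) = x t := by
    show ∑ t', x t' * (Pi.single t (1:k) : Fin m → k) t' = x t
    rw [Finset.sum_eq_single_of_mem t (Finset.mem_univ t)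
      (fun t' _ ht' => by simp [Pi.single_eq_of_ne ht'])]
    simp
  rw [h2] at h
  simpa using h

lemma SRorth_eq_comap {k : Type} [Field k] {m : ℕ} (W : Submodule k (Fin m → k)) :
    SRorth W = Submodule.comap (vecForm k m) W.dualAnnihilator := by
  ext x
  rw [Submodule.mem_comap, Submodule.mem_dualAnnihilator]
  rfl

lemma SRorth_finrank {k : Type} [Field k] {m : ℕ} (W : Submodule k (Fin m → k)) :
    Module.finrank k (SRorth W) + Module.finrank k W = m := by
  rw [SRorth_eq_comap]
  have h := aux_comap_dualAnn_finrank _ (vecForm_inj k m) W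
  rwa [Module.finrank_pi, Fintype.card_fin] at h

end ConcreteForms

section Psi

variable {ℓ : ℕ} {nv : Fin ℓ → ℕ} {F : Type} [Field F]
  {K : Fin ℓ → Type} [∀ i, Field (K i)] [∀ i, Algebra (K i) F]

lemma mem_SRorth {k : Type} [Field k] {m : ℕ} {W : Submodule k (Fin m → k)}
    {v : Fin m → k} : v ∈ SRorth W ↔ ∀ w ∈ W, ∑ t, v t * w t = 0 := Iff.rfl

/-- The adjoint `Ψ_M : F^{Rk M} → F^n` of `Π_M`, `y ↦ y A`. -/
noncomputable def SRpsi (M : SRLat ℓ nv K) :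
    ((i : Fin ℓ) → Fin (finrank (K i) (M i)) → F) →ₗ[F] SRAmb ℓ nv F where
  toFun y := fun i t => ∑ j, y i j * algebraMap (K i) F ((Module.finBasis (K i) (M i) j).val t)
  map_add' a b := by
    funext i t
    simp [add_mul, Finset.sum_add_distrib]
  map_smul' a y := by
    funext i t
    simp [Finset.mul_sum, mul_assoc]

lemma SRpi_adj (M : SRLat ℓ nv K) (x : SRAmb ℓ nv F)
    (y : (i : Fin ℓ) → Fin (finrank (K i) (M i)) → F) :
    ∑ i, ∑ j, y i j * SRpi (F := F) M x i j = ∑ i, ∑ t, SRpsi (F := F) M y i t * x i t := by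
  apply Finset.sum_congr rfl
  intro i _
  simp only [SRpi, SRpsi, LinearMap.coe_mk, AddHom.coe_mk]
  simp_rw [Finset.mul_sum, Finset.sum_mul]
  rw [Finset.sum_comm]
  exact Finset.sum_congr rfl fun t _ => Finset.sum_congr rfl fun j _ => by ring

lemma SRpsi_inj (M : SRLat ℓ nv K) : Function.Injective (SRpsi (F := F) M) := by
  rw [← LinearMap.ker_eq_bot, LinearMap.ker_eq_bot']
  intro y hy
  funext i j
  have hbli : LinearIndependent (K i) (fun j => (Module.finBasis (K i) (M i) j).val) := by
    have h := (Module.finBasis (K i) (M i)).linearIndependent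
    exact h.map' (M i).subtype (Submodule.ker_subtype _)
  have hli := aux_linIndep_algebraMap (F := F) hbli
  rw [Fintype.linearIndependent_iff] at hli
  apply hli (fun j => y i j)
  funext t
  have h := congrFun (congrFun hy i) t
  show (∑ j', y i j' • (fun t => algebraMap (K i) F ((Module.finBasis (K i) (M i) j').val t))) t = 0
  rw [Finset.sum_apply]
  simp only [Pi.smul_apply, smul_eq_mul]
  simpa [SRpsi] using h

lemma SRpsi_range_le_ker (L : SRLat ℓ nv K) :
    LinearMap.range (SRpsi (F := F) L) ≤ LinearMap.ker (SRpi (F := F) (SRlatPerp L)) := by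
  rintro _ ⟨y, rfl⟩
  rw [LinearMap.mem_ker]
  funext i j'
  show ∑ t, SRpsi (F := F) L y i t
      * algebraMap (K i) F ((Module.finBasis (K i) ((SRlatPerp L) i) j').val t) = 0
  simp only [SRpsi, LinearMap.coe_mk, AddHom.coe_mk]
  simp_rw [Finset.sum_mul]
  rw [Finset.sum_comm]
  apply Finset.sum_eq_zero
  intro j _
  have horth : ∑ t, (Module.finBasis (K i) (L i) j).val t
      * (Module.finBasis (K i) ((SRlatPerp L) i) j').val t = 0 := by
    have hmem : ((Module.finBasis (K i) ((SRlatPerp L) i) j') : Fin (nv i) → K i)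
        ∈ SRorth (L i) := (Module.finBasis (K i) ((SRlatPerp L) i) j').2
    rw [mem_SRorth] at hmem
    have h := hmem ((Module.finBasis (K i) (L i) j).val) (Module.finBasis (K i) (L i) j).2
    rw [← h]
    exact Finset.sum_congr rfl fun t _ => mul_comm _ _
  calc ∑ t, y i j * algebraMap (K i) F ((Module.finBasis (K i) (L i) j).val t)
        * algebraMap (K i) F ((Module.finBasis (K i) ((SRlatPerp L) i) j').val t)
      = y i j * algebraMap (K i) F (∑ t, (Module.finBasis (K i) (L i) j).val t
        * (Module.finBasis (K i) ((SRlatPerp L) i) j').val t) := by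
        rw [map_sum, Finset.mul_sum]
        exact Finset.sum_congr rfl fun t _ => by rw [map_mul]; ring
    _ = 0 := by rw [horth, map_zero, mul_zero]

end Psi

lemma aux_finrank_map_add_inf_ker {k V W : Type} [Field k] [AddCommGroup V] [Module k V]
    [AddCommGroup W] [Module k W] [FiniteDimensional k V]
    (f : V →ₗ[k] W) (D : Submodule k V) :
    finrank k (D.map f) + finrank k (D ⊓ LinearMap.ker f : Submodule k V) = finrank k D := by
  have h := LinearMap.finrank_range_add_finrank_ker (f ∘ₗ D.subtype)
  rw [LinearMap.range_comp, Submodule.range_subtype, LinearMap.ker_comp,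
    ← Submodule.finrank_map_subtype_eq D (Submodule.comap D.subtype (LinearMap.ker f)),
    Submodule.map_comap_subtype] at h
  exact h

set_option maxHeartbeats 2000000 in
/-- The dual of the sum-matroid associated to `C` is the
sum-matroid associated to `C^⊥`: for every `L ∈ P(K^n)`,
`ρ_{C^⊥}(L) = ρ_C(L^⊥) + Rk(L) − ρ_C(K^n)`. -/
theorem stmt8_dual_matroid_eq_matroid_of_dual
    {ℓ : ℕ} (hℓ : 0 < ℓ) {nv : Fin ℓ → ℕ} (hnv : ∀ i, 0 < nv i)
    {F : Type} [Field F] [Finite F]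
    {K : Fin ℓ → Type} [∀ i, Field (K i)] [∀ i, Finite (K i)]
    [∀ i, Algebra (K i) F] [∀ i, FiniteDimensional (K i) F]
    (C : Submodule F (SRAmb ℓ nv F)) (k : ℕ) (hk : Module.finrank F C = k)
    (L : SRLat ℓ nv K) :
    SRrho (SRdual C) L = SRrho C (SRlatPerp L) + SRrk L - SRrho C (⊤ : SRLat ℓ nv K) := by

  classical
  have hfrt : ∀ M : SRLat ℓ nv K,
      finrank F ((i : Fin ℓ) → Fin (finrank (K i) (M i)) → F) = SRrk M := by
    intro M
    rw [finrank_SRAmb (F := F) (fun i => finrank (K i) (M i))]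
    rfl
  have hadj : ∀ (M : SRLat ℓ nv K) (E : Submodule F (SRAmb ℓ nv F)),
      SRdual (Submodule.map (SRpi (F := F) M) E)
        = Submodule.comap (SRpsi (F := F) M) (SRdual E) := by
    intro M E
    ext y
    rw [mem_SRdual, Submodule.mem_comap, mem_SRdual]
    constructor
    · intro h x hx
      have h2 := h (SRpi (F := F) M x) (Submodule.mem_map_of_mem hx)
      rw [SRpi_adj] at h2
      exact h2
    · rintro h c ⟨x, hx, rfl⟩
      rw [SRpi_adj]
      exact h x hx
  have hsurj : ∀ M : SRLat ℓ nv K, LinearMap.range (SRpi (F := F) M) = ⊤ := by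
    intro M
    have h1 : SRdual (LinearMap.range (SRpi (F := F) M)) = ⊥ := by
      rw [← Submodule.map_top, hadj, SRdual_top, Submodule.comap_bot,
        LinearMap.ker_eq_bot.mpr (SRpsi_inj M)]
    have h2 := congrArg SRdual h1
    rwa [SRdual_SRdual, SRdual_bot] at h2
  have hrn : ∀ M : SRLat ℓ nv K,
      SRrk M + finrank F (LinearMap.ker (SRpi (F := F) M)) = ∑ i, nv i := by
    intro M
    have h := LinearMap.finrank_range_add_finrank_ker (SRpi (F := F) M)
    rw [hsurj M, finrank_top, hfrt M, finrank_SRAmb (F := F) nv] at h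
    exact h
  have hperp : SRrk (SRlatPerp L) + SRrk L = ∑ i, nv i := by
    unfold SRrk
    rw [← Finset.sum_add_distrib]
    apply Finset.sum_congr rfl
    intro i _
    exact SRorth_finrank (L i)
  have hψr : LinearMap.range (SRpsi (F := F) L) = LinearMap.ker (SRpi (F := F) (SRlatPerp L)) := by
    apply Submodule.eq_of_le_of_finrank_le (SRpsi_range_le_ker L)
    have h1 : finrank F (LinearMap.range (SRpsi (F := F) L)) = SRrk L := by
      rw [LinearMap.finrank_range_of_inj (SRpsi_inj L), hfrt L]
    have h2 := hrn (SRlatPerp L)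
    omega
  obtain ⟨t, ht⟩ : ∃ t : ℕ, finrank F
      (SRdual C ⊓ LinearMap.ker (SRpi (F := F) (SRlatPerp L)) : Submodule F (SRAmb ℓ nv F)) = t :=
    ⟨_, rfl⟩
  have ha : SRrho C (SRlatPerp L) + t = finrank F (SRdual C) := by
    unfold SRrho
    rw [← ht]
    exact aux_finrank_map_add_inf_ker _ (SRdual C)
  have hb : SRrho C (⊤ : SRLat ℓ nv K) = finrank F (SRdual C) := by
    have hker_top : LinearMap.ker (SRpi (F := F) (⊤ : SRLat ℓ nv K)) = ⊥ := by
      have h := hrn ⊤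
      have htop : SRrk (⊤ : SRLat ℓ nv K) = ∑ i, nv i := by
        unfold SRrk
        apply Finset.sum_congr rfl
        intro i _
        rw [show ((⊤ : SRLat ℓ nv K) i) = (⊤ : Submodule (K i) (Fin (nv i) → K i)) from rfl,
          finrank_top, Module.finrank_pi, Fintype.card_fin]
      rw [htop] at h
      have h0 : finrank F (LinearMap.ker (SRpi (F := F) (⊤ : SRLat ℓ nv K))) = 0 := by omega
      exact Submodule.finrank_eq_zero.mp h0
    have h := aux_finrank_map_add_inf_ker (SRpi (F := F) (⊤ : SRLat ℓ nv K)) (SRdual C)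
    rw [hker_top, inf_bot_eq, finrank_bot] at h
    unfold SRrho
    omega
  have hc2 : SRrho (SRdual C) L + t = SRrk L := by
    unfold SRrho
    rw [SRdual_SRdual C]
    have h4 := SRdual_finrank (Submodule.map (SRpi (F := F) L) C)
    rw [hadj L C] at h4
    have h6 : finrank F (Submodule.comap (SRpsi (F := F) L) (SRdual C)) = t := by
      have he := (Submodule.equivMapOfInjective _ (SRpsi_inj L)
        (Submodule.comap (SRpsi (F := F) L) (SRdual C))).finrank_eq
      rw [he, Submodule.map_comap_eq, hψr, inf_comm]
      exact ht
    rw [h6] at h4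
    have h8 : t + finrank F (Submodule.map (SRpi (F := F) L) C) = SRrk L := h4
    omega
  omega
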